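/- arXiv:1702.08405 — 3 statements merged into one kernel-verified Lean document; each statement's English description precedes it below -/
import Mathlib

section
/- For any ATL+ path formula Φ, the number of truth swap points of Φ along any infinite path is at most the number of temporal relative atoms of Φ. That is, if At(Φ) is the set of relative atoms of Φ and λ is an infinite path in a concurrent game model, then TSN(Φ,λ) ≤ |{Ψ ∈ At(Φ) : Ψ is a temporal formula}|. -/
/-- A concurrent game model: agents, states, actions, an action availability
function `d` (nonempty at each agent/state), a transition function `o`, and a
valuation `v` of proposition symbols (indexed by `ℕ`). -/
structure CGM (Agt St Act : Type) where
  d : Agt → St → Set Act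
  d_ne : ∀ a q, (d a q).Nonempty
  o : St → (Agt → Act) → St
  v : ℕ → Set St

/-- `Λ` is an infinite path in `M`: each transition is generated by an
admissible action profile. -/
def CGM.IsPath {Agt St Act : Type} (M : CGM Agt St Act) (Λ : ℕ → St) : Prop :=
  ∀ n, ∃ α : Agt → Act, (∀ a, α a ∈ M.d a (Λ n)) ∧ Λ (n + 1) = M.o (Λ n) α

/-- ATL⁺ path formulae over an abstract type `σ` of state formulae (covering
proposition symbols and strategic formulae `⟨⟨A⟩⟩Ψ`, whose truth at a state is
prefix-independent): Boolean combinations of state formulae, `X φ` and `φ U ψ`. -/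
inductive PathFormula (σ : Type) where
  | state : σ → PathFormula σ
  | neg : PathFormula σ → PathFormula σ
  | or : PathFormula σ → PathFormula σ → PathFormula σ
  | next : σ → PathFormula σ
  | until_ : σ → σ → PathFormula σ

/-- Finite path semantics: truth of a path formula on the prefix of `Λ` of
length `n` (i.e. the finite path `Λ[0] … Λ[n]`, with `n` transitions), given a
satisfaction relation `sat` for state formulae. -/
def finTruth {σ St : Type} (sat : σ → St → Prop) (Λ : ℕ → St) :
    PathFormula σ → ℕ → Prop
  | .state φ, _ => sat φ (Λ 0)
  | .neg Φ, n => ¬ finTruth sat Λ Φ n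
  | .or Φ Ψ, n => finTruth sat Λ Φ n ∨ finTruth sat Λ Ψ n
  | .next φ, n => 1 ≤ n ∧ sat φ (Λ 1)
  | .until_ φ ψ, n => ∃ i ≤ n, sat ψ (Λ i) ∧ ∀ j < i, sat φ (Λ j)

/-- The set of temporal relative atoms of a path formula: its `X`-atoms
(inl) and `U`-atoms (inr). -/
def tempAtoms {σ : Type} [DecidableEq σ] : PathFormula σ → Finset (σ ⊕ σ × σ)
  | .state _ => ∅
  | .neg Φ => tempAtoms Φ
  | .or Φ Ψ => tempAtoms Φ ∪ tempAtoms Ψ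
  | .next φ => {Sum.inl φ}
  | .until_ φ ψ => {Sum.inr (φ, ψ)}

/-- The truth swap points of `Φ` on `Λ`: indices `i ≥ 1` where the
finite-prefix truth value of `Φ` changes between the prefixes of lengths
`i - 1` and `i`. -/
def swapPoints {σ St : Type} (sat : σ → St → Prop) (Λ : ℕ → St)
    (Φ : PathFormula σ) : Set ℕ :=
  {i : ℕ | 1 ≤ i ∧ ¬ (finTruth sat Λ Φ (i - 1) ↔ finTruth sat Λ Φ i)}

def atomTruth {σ St : Type} (sat : σ → St → Prop) (Λ : ℕ → St) :
    σ ⊕ σ × σ → ℕ → Prop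
  | .inl φ, n => 1 ≤ n ∧ sat φ (Λ 1)
  | .inr (φ, ψ), n => ∃ i ≤ n, sat ψ (Λ i) ∧ ∀ j < i, sat φ (Λ j)

lemma atomTruth_mono {σ St : Type} (sat : σ → St → Prop) (Λ : ℕ → St)
    (a : σ ⊕ σ × σ) {m n : ℕ} (h : m ≤ n) (hm : atomTruth sat Λ a m) :
    atomTruth sat Λ a n := by
  rcases a with φ | ⟨φ, ψ⟩
  · exact ⟨hm.1.trans h, hm.2⟩
  · obtain ⟨i, hi, h1, h2⟩ := hm
    exact ⟨i, hi.trans h, h1, h2⟩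

def atomSwap {σ St : Type} (sat : σ → St → Prop) (Λ : ℕ → St)
    (a : σ ⊕ σ × σ) : Set ℕ :=
  {i : ℕ | 1 ≤ i ∧ ¬ (atomTruth sat Λ a (i - 1) ↔ atomTruth sat Λ a i)}

lemma atomSwap_subsingleton {σ St : Type} (sat : σ → St → Prop) (Λ : ℕ → St)
    (a : σ ⊕ σ × σ) : (atomSwap sat Λ a).Subsingleton := by
  have key : ∀ i ∈ atomSwap sat Λ a,
      ¬ atomTruth sat Λ a (i - 1) ∧ atomTruth sat Λ a i := by
    intro i hi
    obtain ⟨h1, h2⟩ := hi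
    by_cases hp : atomTruth sat Λ a (i - 1)
    · exact absurd ⟨fun _ => atomTruth_mono sat Λ a (Nat.sub_le i 1) hp,
        fun _ => hp⟩ h2
    · refine ⟨hp, ?_⟩
      by_contra hq
      exact h2 ⟨fun h => absurd h hp, fun h => absurd h hq⟩
  intro i hi j hj
  by_contra hne
  rcases Nat.lt_or_ge i j with h | h
  · exact (key j hj).1 (atomTruth_mono sat Λ a (by omega) (key i hi).2)
  · rcases Nat.lt_or_ge j i with h' | h'
    · exact (key i hi).1 (atomTruth_mono sat Λ a (by omega) (key j hj).2)
    · omega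

lemma finTruth_det {σ St : Type} [DecidableEq σ] (sat : σ → St → Prop)
    (Λ : ℕ → St) (Φ : PathFormula σ) (m n : ℕ)
    (h : ∀ a ∈ tempAtoms Φ, (atomTruth sat Λ a m ↔ atomTruth sat Λ a n)) :
    finTruth sat Λ Φ m ↔ finTruth sat Λ Φ n := by
  induction Φ with
  | state φ => simp [finTruth]
  | neg Φ ih =>
    simp only [finTruth]
    exact not_congr (ih h)
  | or Φ Ψ ih1 ih2 =>
    simp only [finTruth]
    have h1 := ih1 (fun a ha => h a (by simp [tempAtoms, ha]))
    have h2 := ih2 (fun a ha => h a (by simp [tempAtoms, ha]))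
    exact or_congr h1 h2
  | next φ => exact h (Sum.inl φ) (by simp [tempAtoms])
  | until_ φ ψ => exact h (Sum.inr (φ, ψ)) (by simp [tempAtoms])

lemma swapPoints_subset {σ St : Type} [DecidableEq σ] (sat : σ → St → Prop)
    (Λ : ℕ → St) (Φ : PathFormula σ) :
    swapPoints sat Λ Φ ⊆ ⋃ a ∈ (tempAtoms Φ : Set (σ ⊕ σ × σ)), atomSwap sat Λ a := by
  intro i hi
  obtain ⟨h1, h2⟩ := hi
  by_contra hc
  simp only [Set.mem_iUnion, not_exists] at hc
  refine h2 (finTruth_det sat Λ Φ (i - 1) i fun a ha => ?_)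
  by_contra hne
  exact hc a (Finset.mem_coe.mpr ha) ⟨h1, hne⟩

/-- For any ATL⁺ path formula `Φ` and any infinite path `Λ` in a
CGM, the number of truth swap points of `Φ` along `Λ` is at most the number of
temporal relative atoms of `Φ`:  `TSN(Φ,Λ) ≤ |{Ψ ∈ At(Φ) : Ψ temporal}|`. -/
theorem truth_swap_number_le_temporal_atoms {Agt St Act σ : Type}
    [DecidableEq σ] (M : CGM Agt St Act) (sat : σ → St → Prop)
    (Λ : ℕ → St) (hΛ : M.IsPath Λ) (Φ : PathFormula σ) :
    (swapPoints sat Λ Φ).Finite ∧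
    (swapPoints sat Λ Φ).ncard ≤ (tempAtoms Φ).card := by
  have hsub := swapPoints_subset sat Λ Φ
  have main : ∀ s : Finset (σ ⊕ σ × σ),
      (⋃ a ∈ (s : Set (σ ⊕ σ × σ)), atomSwap sat Λ a).Finite ∧
      (⋃ a ∈ (s : Set (σ ⊕ σ × σ)), atomSwap sat Λ a).ncard ≤ s.card := by
    intro s
    induction s using Finset.induction with
    | empty => simp
    | @insert b t hx ih =>
      have hrw : (⋃ a ∈ ((insert b t : Finset _) : Set (σ ⊕ σ × σ)), atomSwap sat Λ a)
          = atomSwap sat Λ b ∪ ⋃ a ∈ (t : Set (σ ⊕ σ × σ)), atomSwap sat Λ a := by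
        simp [Set.biUnion_insert]
      rw [hrw]
      have hbfin : (atomSwap sat Λ b).Finite :=
        (atomSwap_subsingleton sat Λ b).finite
      have hbcard : (atomSwap sat Λ b).ncard ≤ 1 := by
        rcases Set.eq_empty_or_nonempty (atomSwap sat Λ b) with h | h
        · simp [h]
        · obtain ⟨x, hx'⟩ := h
          have : atomSwap sat Λ b = {x} :=
            (atomSwap_subsingleton sat Λ b).eq_singleton_of_mem hx'
          simp [this]
      refine ⟨hbfin.union ih.1, ?_⟩
      calc (atomSwap sat Λ b ∪ ⋃ a ∈ (t : Set (σ ⊕ σ × σ)), atomSwap sat Λ a).ncard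
          ≤ (atomSwap sat Λ b).ncard
            + (⋃ a ∈ (t : Set (σ ⊕ σ × σ)), atomSwap sat Λ a).ncard :=
            Set.ncard_union_le _ _
        _ ≤ 1 + t.card := Nat.add_le_add hbcard ih.2
        _ = (insert b t).card := by rw [Finset.card_insert_of_notMem hx]; omega
  obtain ⟨hfin, hcard⟩ := main (tempAtoms Φ)
  refine ⟨hfin.subset hsub, le_trans ?_ hcard⟩
  exact Set.ncard_le_ncard hsub hfin
end

section
/- Finite Büchi games are positionally determined: in a two-player game on a finite directed graph where every vertex has a successor, vertices are partitioned between players 0 and 1, and player 0 wins an infinite play iff some vertex in a designated set F is visited infinitely often, then from every vertex exactly one of the players has a positional winning strategy. -/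
variable {V : Type}

/-- A positional strategy `σ` for player `i` in a graph game: at every vertex
owned by `i` it selects an edge. -/
def BuchiLegal (E : V → V → Prop) (owner : V → Bool) (i : Bool)
    (σ : V → V) : Prop :=
  ∀ v, owner v = i → E v (σ v)

/-- A play from `v` consistent with the positional strategy `σ` of player `i`. -/
def BuchiConsistent (E : V → V → Prop) (owner : V → Bool) (i : Bool)
    (σ : V → V) (v : V) (π : ℕ → V) : Prop :=
  π 0 = v ∧ ∀ n, E (π n) (π (n + 1)) ∧ (owner (π n) = i → π (n + 1) = σ (π n))

/-- Player `i` has a positional winning strategy from `v` in the Büchi game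
with target set `F` (player `false`, i.e. player 0, wins a play iff `F` is
visited infinitely often). -/
def BuchiPosWinning (E : V → V → Prop) (owner : V → Bool) (F : Set V)
    (i : Bool) (v : V) : Prop :=
  ∃ σ : V → V, BuchiLegal E owner i σ ∧
    ∀ π : ℕ → V, BuchiConsistent E owner i σ v π →
      ({n : ℕ | π n ∈ F}.Infinite ↔ i = false)

open Classical

set_option linter.unusedSectionVars false
set_option linter.unnecessarySimpa false

namespace BuchiAux

variable [Fintype V]

/-- one-step controllable predecessor for player `i`. -/
def Cpre (E : V → V → Prop) (owner : V → Bool) (i : Bool) (S : Set V) : Set V :=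
  {v | (owner v = i ∧ ∃ w, E v w ∧ w ∈ S) ∨ (owner v ≠ i ∧ ∀ w, E v w → w ∈ S)}

lemma Cpre_mono (E : V → V → Prop) (owner : V → Bool) (i : Bool) {S S' : Set V}
    (h : S ⊆ S') : Cpre E owner i S ⊆ Cpre E owner i S' := by
  intro v hv
  rcases hv with ⟨h1, w, hw, hwS⟩ | ⟨h1, h2⟩
  · exact Or.inl ⟨h1, w, hw, h hwS⟩
  · exact Or.inr ⟨h1, fun w hw => h (h2 w hw)⟩

/-- iterated attractor levels for player `i` towards `T`. -/
def AttrN (E : V → V → Prop) (owner : V → Bool) (i : Bool) (T : Set V) : ℕ → Set V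
  | 0 => ∅
  | n+1 => T ∪ Cpre E owner i (AttrN E owner i T n)

def Attr (E : V → V → Prop) (owner : V → Bool) (i : Bool) (T : Set V) : Set V :=
  ⋃ n, AttrN E owner i T n

lemma AttrN_mono_step (E : V → V → Prop) (owner : V → Bool) (i : Bool) (T : Set V) :
    ∀ n, AttrN E owner i T n ⊆ AttrN E owner i T (n+1) := by
  intro n
  induction n with
  | zero => simp [AttrN]
  | succ n ih =>
      exact Set.union_subset_union (subset_refl _) (Cpre_mono E owner i ih)

lemma AttrN_mono (E : V → V → Prop) (owner : V → Bool) (i : Bool) (T : Set V)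
    {m n : ℕ} (h : m ≤ n) : AttrN E owner i T m ⊆ AttrN E owner i T n := by
  induction n with
  | zero => simpa [Nat.le_zero.mp h]
  | succ n ih =>
      rcases Nat.lt_or_ge m (n+1) with h' | h'
      · exact (ih (Nat.lt_succ_iff.mp h')).trans (AttrN_mono_step E owner i T n)
      · have : m = n+1 := le_antisymm h h'
        simp [this]

lemma AttrN_subset_Attr (E : V → V → Prop) (owner : V → Bool) (i : Bool) (T : Set V)
    (n : ℕ) : AttrN E owner i T n ⊆ Attr E owner i T :=
  Set.subset_iUnion (fun n => AttrN E owner i T n) n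

lemma T_subset_Attr (E : V → V → Prop) (owner : V → Bool) (i : Bool) (T : Set V) :
    T ⊆ Attr E owner i T := by
  intro v hv
  exact AttrN_subset_Attr E owner i T 1 (Or.inl hv)

lemma AttrN_mono_T (E : V → V → Prop) (owner : V → Bool) (i : Bool) {T T' : Set V}
    (h : T ⊆ T') : ∀ n, AttrN E owner i T n ⊆ AttrN E owner i T' n := by
  intro n
  induction n with
  | zero => simp [AttrN]
  | succ n ih => exact Set.union_subset_union h (Cpre_mono E owner i ih)

lemma Attr_mono_T (E : V → V → Prop) (owner : V → Bool) (i : Bool) {T T' : Set V}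
    (h : T ⊆ T') : Attr E owner i T ⊆ Attr E owner i T' := by
  intro v hv
  rcases Set.mem_iUnion.mp hv with ⟨n, hn⟩
  exact Set.mem_iUnion.mpr ⟨n, AttrN_mono_T E owner i h n hn⟩

/-- rank of a vertex in the attractor. -/
noncomputable def rankA (E : V → V → Prop) (owner : V → Bool) (i : Bool) (T : Set V)
    (v : V) : ℕ :=
  if h : ∃ n, v ∈ AttrN E owner i T n then Nat.find h else 0

lemma mem_AttrN_rankA (E : V → V → Prop) (owner : V → Bool) (i : Bool) (T : Set V)
    {v : V} (hv : v ∈ Attr E owner i T) : v ∈ AttrN E owner i T (rankA E owner i T v) := by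
  have h : ∃ n, v ∈ AttrN E owner i T n := Set.mem_iUnion.mp hv
  simpa [rankA, h] using Nat.find_spec h

lemma rankA_le (E : V → V → Prop) (owner : V → Bool) (i : Bool) (T : Set V)
    {v : V} {n : ℕ} (hv : v ∈ AttrN E owner i T n) : rankA E owner i T v ≤ n := by
  have h : ∃ n, v ∈ AttrN E owner i T n := ⟨n, hv⟩
  rw [rankA, dif_pos h]
  exact Nat.find_le hv

lemma rankA_pos (E : V → V → Prop) (owner : V → Bool) (i : Bool) (T : Set V)
    {v : V} (hv : v ∈ Attr E owner i T) : 0 < rankA E owner i T v := by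
  rcases Nat.eq_zero_or_pos (rankA E owner i T v) with h | h
  · have := mem_AttrN_rankA E owner i T hv
    rw [h] at this
    simp [AttrN] at this
  · exact h

/-- the attractor is closed under `Cpre`. -/
lemma Cpre_Attr_subset (E : V → V → Prop) (owner : V → Bool) (i : Bool) (T : Set V) :
    Cpre E owner i (Attr E owner i T) ⊆ Attr E owner i T := by
  intro v hv
  rcases hv with ⟨h1, w, hw, hwA⟩ | ⟨h1, h2⟩
  · rcases Set.mem_iUnion.mp hwA with ⟨n, hn⟩
    exact AttrN_subset_Attr E owner i T (n+1) (Or.inr (Or.inl ⟨h1, w, hw, hn⟩))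
  · classical
    set g : V → ℕ := rankA E owner i T with hg
    set N : ℕ := Finset.univ.sup g with hN
    have hall : ∀ w, E v w → w ∈ AttrN E owner i T N := by
      intro w hw
      have hwA := h2 w hw
      have h1' := mem_AttrN_rankA E owner i T hwA
      exact AttrN_mono E owner i T (Finset.le_sup (Finset.mem_univ w)) h1'
    exact AttrN_subset_Attr E owner i T (N+1) (Or.inr (Or.inr ⟨h1, hall⟩))

/-- key step lemma: a vertex of the attractor not in `T` can be controlled one
step closer. -/
lemma attr_step (E : V → V → Prop) (owner : V → Bool) (i : Bool) (T : Set V)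
    {v : V} (hv : v ∈ Attr E owner i T) (hvT : v ∉ T) :
    v ∈ Cpre E owner i (AttrN E owner i T (rankA E owner i T v - 1)) := by
  have h1 := mem_AttrN_rankA E owner i T hv
  have hpos := rankA_pos E owner i T hv
  obtain ⟨m, hm⟩ : ∃ m, rankA E owner i T v = m + 1 :=
    ⟨rankA E owner i T v - 1, (Nat.succ_pred_eq_of_pos hpos).symm⟩
  rw [hm] at h1
  rcases h1 with h1 | h1
  · exact absurd h1 hvT
  · simpa [hm] using h1

/-- no strictly descending sequence of naturals. -/
lemma no_strict_desc (f : ℕ → ℕ) (h : ∀ n, f (n+1) < f n) : False := by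
  have key : ∀ n, f n + n ≤ f 0 := by
    intro n
    induction n with
    | zero => simp
    | succ n ih => have := h n; omega
  have := key (f 0 + 1); omega

/-- a weakly descending chain of sets of a fintype must stall somewhere. -/
lemma desc_chain_stall (A : ℕ → Set V) (h : ∀ n, A (n+1) ⊆ A n) :
    ∃ n, A (n+1) = A n := by
  by_contra hc
  push_neg at hc
  refine no_strict_desc (fun n => (A n).ncard) (fun n => ?_)
  exact Set.ncard_lt_ncard (ssubset_of_subset_of_ne (h n) (hc n)) (Set.toFinite _)

/-- one iteration of the Büchi operator for player 0. -/
def Gop (E : V → V → Prop) (owner : V → Bool) (F : Set V) (S : Set V) : Set V :=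
  Attr E owner false (F ∩ Cpre E owner false S)

lemma Gop_mono (E : V → V → Prop) (owner : V → Bool) (F : Set V) {S S' : Set V}
    (h : S ⊆ S') : Gop E owner F S ⊆ Gop E owner F S' :=
  Attr_mono_T E owner false (Set.inter_subset_inter (subset_refl _) (Cpre_mono E owner false h))

/-- the descending approximation of the player-0 winning region. -/
def Bseq (E : V → V → Prop) (owner : V → Bool) (F : Set V) : ℕ → Set V
  | 0 => Set.univ
  | n+1 => Gop E owner F (Bseq E owner F n)

lemma Bseq_anti_step (E : V → V → Prop) (owner : V → Bool) (F : Set V) :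
    ∀ n, Bseq E owner F (n+1) ⊆ Bseq E owner F n := by
  intro n
  induction n with
  | zero => simp [Bseq]
  | succ n ih => exact Gop_mono E owner F ih

lemma Bseq_anti (E : V → V → Prop) (owner : V → Bool) (F : Set V) {m n : ℕ}
    (h : m ≤ n) : Bseq E owner F n ⊆ Bseq E owner F m := by
  induction n with
  | zero => simp [Nat.le_zero.mp h]
  | succ n ih =>
      rcases Nat.lt_or_ge m (n+1) with h' | h'
      · exact (Bseq_anti_step E owner F n).trans (ih (Nat.lt_succ_iff.mp h'))
      · have : m = n+1 := le_antisymm h h'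
        simp [this]

/-- index where the approximation stalls. -/
noncomputable def nstall (E : V → V → Prop) (owner : V → Bool) (F : Set V) : ℕ :=
  Classical.choose (desc_chain_stall (Bseq E owner F) (Bseq_anti_step E owner F))

/-- the player-0 winning region. -/
noncomputable def W0 (E : V → V → Prop) (owner : V → Bool) (F : Set V) : Set V :=
  Bseq E owner F (nstall E owner F)

lemma W0_fix (E : V → V → Prop) (owner : V → Bool) (F : Set V) :
    Gop E owner F (W0 E owner F) = W0 E owner F :=
  Classical.choose_spec (desc_chain_stall (Bseq E owner F) (Bseq_anti_step E owner F))

lemma W0_subset_Bseq (E : V → V → Prop) (owner : V → Bool) (F : Set V) (k : ℕ) :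
    W0 E owner F ⊆ Bseq E owner F k := by
  rcases le_or_gt k (nstall E owner F) with h | h
  · exact Bseq_anti E owner F h
  · have key : ∀ m, Bseq E owner F (nstall E owner F + m) = W0 E owner F := by
      intro m
      induction m with
      | zero => rfl
      | succ m ih =>
          have h2 : Bseq E owner F (nstall E owner F + m + 1)
              = Gop E owner F (Bseq E owner F (nstall E owner F + m)) := rfl
          rw [show nstall E owner F + (m+1) = nstall E owner F + m + 1 from rfl, h2, ih]
          exact W0_fix E owner F
    have h3 : Bseq E owner F k = W0 E owner F := by
      have := key (k - nstall E owner F)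
      rwa [Nat.add_sub_cancel' (le_of_lt h)] at this
    rw [h3]

/-! ### Player 0's positional winning strategy on `W0` -/

def T0 (E : V → V → Prop) (owner : V → Bool) (F : Set V) : Set V :=
  F ∩ Cpre E owner false (W0 E owner F)

lemma W0_eq_attr (E : V → V → Prop) (owner : V → Bool) (F : Set V) :
    W0 E owner F = Attr E owner false (T0 E owner F) :=
  (W0_fix E owner F).symm

noncomputable def rank0 (E : V → V → Prop) (owner : V → Bool) (F : Set V) (v : V) : ℕ :=
  rankA E owner false (T0 E owner F) v

lemma ex0 (E : V → V → Prop) (owner : V → Bool) (F : Set V) {v : V}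
    (ho : owner v = false) (hv : v ∈ W0 E owner F) :
    ∃ w, E v w ∧ w ∈ W0 E owner F ∧
      (v ∉ T0 E owner F → rank0 E owner F w < rank0 E owner F v) := by
  by_cases hT : v ∈ T0 E owner F
  · rcases hT.2 with ⟨_, w, hw, hwW⟩ | ⟨hne, _⟩
    · exact ⟨w, hw, hwW, fun h => absurd hT h⟩
    · exact absurd ho hne
  · rw [W0_eq_attr] at hv
    have hstep := attr_step E owner false (T0 E owner F) hv hT
    rcases hstep with ⟨_, w, hw, hwA⟩ | ⟨hne, _⟩
    · refine ⟨w, hw, ?_, fun _ => ?_⟩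
      · rw [W0_eq_attr]
        exact AttrN_subset_Attr E owner false (T0 E owner F) _ hwA
      · have h1 : rank0 E owner F w ≤ rank0 E owner F v - 1 :=
          rankA_le E owner false (T0 E owner F) hwA
        have h2 : 0 < rank0 E owner F v := rankA_pos E owner false (T0 E owner F) hv
        omega
    · exact absurd ho hne

lemma all0 (E : V → V → Prop) (owner : V → Bool) (F : Set V) {v w : V}
    (ho : owner v = true) (hv : v ∈ W0 E owner F) (hw : E v w) :
    w ∈ W0 E owner F ∧
      (v ∉ T0 E owner F → rank0 E owner F w < rank0 E owner F v) := by
  by_cases hT : v ∈ T0 E owner F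
  · rcases hT.2 with ⟨hf, _⟩ | ⟨_, hall⟩
    · simp [ho] at hf
    · exact ⟨hall w hw, fun h => absurd hT h⟩
  · rw [W0_eq_attr] at hv
    have hstep := attr_step E owner false (T0 E owner F) hv hT
    rcases hstep with ⟨hf, _⟩ | ⟨_, hall⟩
    · simp [ho] at hf
    · refine ⟨?_, fun _ => ?_⟩
      · rw [W0_eq_attr]
        exact AttrN_subset_Attr E owner false (T0 E owner F) _ (hall w hw)
      · have h1 : rank0 E owner F w ≤ rank0 E owner F v - 1 :=
          rankA_le E owner false (T0 E owner F) (hall w hw)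
        have h2 : 0 < rank0 E owner F v := rankA_pos E owner false (T0 E owner F) hv
        omega

noncomputable def sigma0 (E : V → V → Prop) (htotal : ∀ v, ∃ w, E v w)
    (owner : V → Bool) (F : Set V) (v : V) : V :=
  if h : owner v = false ∧ v ∈ W0 E owner F then
    Classical.choose (ex0 E owner F h.1 h.2)
  else Classical.choose (htotal v)

lemma sigma0_legal (E : V → V → Prop) (htotal : ∀ v, ∃ w, E v w)
    (owner : V → Bool) (F : Set V) :
    BuchiLegal E owner false (sigma0 E htotal owner F) := by
  intro v ho
  by_cases h : owner v = false ∧ v ∈ W0 E owner F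
  · rw [sigma0, dif_pos h]
    exact (Classical.choose_spec (ex0 E owner F h.1 h.2)).1
  · rw [sigma0, dif_neg h]
    exact Classical.choose_spec (htotal v)

/-- one step of a play consistent with `sigma0` inside `W0`. -/
lemma step0 (E : V → V → Prop) (htotal : ∀ v, ∃ w, E v w)
    (owner : V → Bool) (F : Set V) {v w : V} (hv : v ∈ W0 E owner F)
    (hE : E v w) (hcons : owner v = false → w = sigma0 E htotal owner F v) :
    w ∈ W0 E owner F ∧
      (v ∉ T0 E owner F → rank0 E owner F w < rank0 E owner F v) := by
  cases ho : owner v with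
  | false =>
      have h : owner v = false ∧ v ∈ W0 E owner F := ⟨ho, hv⟩
      have hw := hcons ho
      rw [sigma0, dif_pos h] at hw
      have spec := Classical.choose_spec (ex0 E owner F h.1 h.2)
      rw [hw]
      exact ⟨spec.2.1, spec.2.2⟩
  | true => exact all0 E owner F ho hv hE

lemma play0 (E : V → V → Prop) (htotal : ∀ v, ∃ w, E v w)
    (owner : V → Bool) (F : Set V) {v : V} (hv : v ∈ W0 E owner F)
    (π : ℕ → V) (hπ : BuchiConsistent E owner false (sigma0 E htotal owner F) v π) :
    {n : ℕ | π n ∈ F}.Infinite := by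
  obtain ⟨h0, hstep⟩ := hπ
  have inv : ∀ n, π n ∈ W0 E owner F := by
    intro n
    induction n with
    | zero => rwa [h0]
    | succ n ih =>
        exact (step0 E htotal owner F ih (hstep n).1 (hstep n).2).1
  have reach : ∀ r n, rank0 E owner F (π n) ≤ r → ∃ m, n ≤ m ∧ π m ∈ T0 E owner F := by
    intro r
    induction r with
    | zero =>
        intro n hr
        have : π n ∈ Attr E owner false (T0 E owner F) := by
          rw [← W0_eq_attr]; exact inv n
        have h2 : 0 < rank0 E owner F (π n) :=
          rankA_pos E owner false (T0 E owner F) this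
        omega
    | succ r ih =>
        intro n hr
        by_cases hT : π n ∈ T0 E owner F
        · exact ⟨n, le_refl n, hT⟩
        · have hlt := (step0 E htotal owner F (inv n) (hstep n).1 (hstep n).2).2 hT
          obtain ⟨m, hm, hmT⟩ := ih (n+1) (by omega)
          exact ⟨m, by omega, hmT⟩
  by_contra hfin
  rw [Set.not_infinite] at hfin
  obtain ⟨b, hb⟩ := hfin.bddAbove
  obtain ⟨m, hm, hmT⟩ := reach (rank0 E owner F (π (b+1))) (b+1) (le_refl _)
  have : m ≤ b := hb (show m ∈ {n | π n ∈ F} from hmT.1)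
  omega

/-! ### Player 1's positional winning strategy outside `W0` -/

noncomputable def lvl (E : V → V → Prop) (owner : V → Bool) (F : Set V) (v : V) : ℕ :=
  if h : ∃ k, v ∉ Bseq E owner F k then Nat.find h else 0

lemma lvl_ex {E : V → V → Prop} {owner : V → Bool} {F : Set V} {v : V}
    (hv : v ∉ W0 E owner F) : ∃ k, v ∉ Bseq E owner F k :=
  ⟨nstall E owner F, hv⟩

lemma notmem_Bseq_lvl (E : V → V → Prop) (owner : V → Bool) (F : Set V) {v : V}
    (hv : v ∉ W0 E owner F) : v ∉ Bseq E owner F (lvl E owner F v) := by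
  have h := lvl_ex hv
  rw [lvl, dif_pos h]
  exact Nat.find_spec h

lemma lvl_le (E : V → V → Prop) (owner : V → Bool) (F : Set V) {v : V} {k : ℕ}
    (hv : v ∉ Bseq E owner F k) : lvl E owner F v ≤ k := by
  have h : ∃ k, v ∉ Bseq E owner F k := ⟨k, hv⟩
  rw [lvl, dif_pos h]
  exact Nat.find_le hv

lemma lvl_pos (E : V → V → Prop) (owner : V → Bool) (F : Set V) {v : V}
    (hv : v ∉ W0 E owner F) : 0 < lvl E owner F v := by
  rcases Nat.eq_zero_or_pos (lvl E owner F v) with h | h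
  · have h1 := notmem_Bseq_lvl E owner F hv
    rw [h] at h1
    exact absurd (Set.mem_univ v) h1
  · exact h

lemma mem_Bseq_pred (E : V → V → Prop) (owner : V → Bool) (F : Set V) {v : V}
    (hv : v ∉ W0 E owner F) : v ∈ Bseq E owner F (lvl E owner F v - 1) := by
  by_contra h
  have := lvl_le E owner F h
  have := lvl_pos E owner F hv
  omega

lemma notmem_W0_of_notmem_Bseq (E : V → V → Prop) (owner : V → Bool) (F : Set V)
    {v : V} {k : ℕ} (hv : v ∉ Bseq E owner F k) : v ∉ W0 E owner F :=
  fun h => hv (W0_subset_Bseq E owner F k h)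

/-- the key combinatorial content for player 1's moves. -/
lemma step1_core (E : V → V → Prop) (owner : V → Bool) (F : Set V) {v : V}
    (hv : v ∉ W0 E owner F) :
    (owner v = true → ∃ w, E v w ∧ w ∉ W0 E owner F ∧
        lvl E owner F w ≤ lvl E owner F v ∧ (v ∈ F → lvl E owner F w < lvl E owner F v)) ∧
    (owner v = false → ∀ w, E v w → w ∉ W0 E owner F ∧
        lvl E owner F w ≤ lvl E owner F v ∧ (v ∈ F → lvl E owner F w < lvl E owner F v)) := by
  set k : ℕ := lvl E owner F v - 1 with hk
  have hkv : lvl E owner F v = k + 1 := by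
    have := lvl_pos E owner F hv
    omega
  have hvB : v ∈ Bseq E owner F k := mem_Bseq_pred E owner F hv
  have hnB : v ∉ Bseq E owner F (k+1) := by
    rw [← hkv]
    exact notmem_Bseq_lvl E owner F hv
  -- Bseq (k+1) = Attr false (F ∩ Cpre false (Bseq k))
  set Tk : Set V := F ∩ Cpre E owner false (Bseq E owner F k) with hTk
  have hBk1 : Bseq E owner F (k+1) = Attr E owner false Tk := rfl
  rw [hBk1] at hnB
  by_cases hF : v ∈ F
  · -- then v ∉ Cpre false (Bseq k)
    have hnC : v ∉ Cpre E owner false (Bseq E owner F k) := by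
      intro hC
      exact hnB (T_subset_Attr E owner false Tk ⟨hF, hC⟩)
    constructor
    · intro ho
      have h1 : ¬ (owner v ≠ false ∧ ∀ w, E v w → w ∈ Bseq E owner F k) := fun h => hnC (Or.inr h)
      push_neg at h1
      obtain ⟨w, hw, hwB⟩ := h1 (by simp [ho])
      have hlw : lvl E owner F w ≤ k := lvl_le E owner F hwB
      exact ⟨w, hw, notmem_W0_of_notmem_Bseq E owner F hwB,
        by omega, fun _ => by omega⟩
    · intro ho w hw
      have h1 : ¬ (owner v = false ∧ ∃ w, E v w ∧ w ∈ Bseq E owner F k) := fun h => hnC (Or.inl h)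
      push_neg at h1
      have hwB : w ∉ Bseq E owner F k := by
        intro hmem
        exact (h1 ho w hw) hmem
      have hlw : lvl E owner F w ≤ k := lvl_le E owner F hwB
      exact ⟨notmem_W0_of_notmem_Bseq E owner F hwB, by omega, fun _ => by omega⟩
  · -- v outside the attractor: can stay outside
    constructor
    · intro ho
      by_contra hc
      push_neg at hc
      have hall : ∀ w, E v w → w ∈ Attr E owner false Tk := by
        intro w hw
        by_contra hwA
        have hwB : w ∉ Bseq E owner F (k+1) := by rwa [hBk1]
        have hlw : lvl E owner F w ≤ k + 1 := lvl_le E owner F hwB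
        exact hF (hc w hw (notmem_W0_of_notmem_Bseq E owner F hwB) (by omega)).1
      exact hnB (Cpre_Attr_subset E owner false Tk (Or.inr ⟨by simp [ho], hall⟩))
    · intro ho w hw
      have hwA : w ∉ Attr E owner false Tk := by
        intro hwA
        exact hnB (Cpre_Attr_subset E owner false Tk (Or.inl ⟨ho, w, hw, hwA⟩))
      have hwB : w ∉ Bseq E owner F (k+1) := by rwa [hBk1]
      have hlw : lvl E owner F w ≤ k + 1 := lvl_le E owner F hwB
      exact ⟨notmem_W0_of_notmem_Bseq E owner F hwB, by omega,
        fun hvF => absurd hvF hF⟩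

noncomputable def sigma1 (E : V → V → Prop) (htotal : ∀ v, ∃ w, E v w)
    (owner : V → Bool) (F : Set V) (v : V) : V :=
  if h : owner v = true ∧ v ∉ W0 E owner F then
    Classical.choose ((step1_core E owner F h.2).1 h.1)
  else Classical.choose (htotal v)

lemma sigma1_legal (E : V → V → Prop) (htotal : ∀ v, ∃ w, E v w)
    (owner : V → Bool) (F : Set V) :
    BuchiLegal E owner true (sigma1 E htotal owner F) := by
  intro v ho
  by_cases h : owner v = true ∧ v ∉ W0 E owner F
  · rw [sigma1, dif_pos h]
    exact (Classical.choose_spec ((step1_core E owner F h.2).1 h.1)).1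
  · rw [sigma1, dif_neg h]
    exact Classical.choose_spec (htotal v)

lemma step1 (E : V → V → Prop) (htotal : ∀ v, ∃ w, E v w)
    (owner : V → Bool) (F : Set V) {v w : V} (hv : v ∉ W0 E owner F)
    (hE : E v w) (hcons : owner v = true → w = sigma1 E htotal owner F v) :
    w ∉ W0 E owner F ∧ lvl E owner F w ≤ lvl E owner F v ∧
      (v ∈ F → lvl E owner F w < lvl E owner F v) := by
  cases ho : owner v with
  | false => exact (step1_core E owner F hv).2 ho w hE
  | true =>
      have h : owner v = true ∧ v ∉ W0 E owner F := ⟨ho, hv⟩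
      have hw := hcons ho
      rw [sigma1, dif_pos h] at hw
      have spec := Classical.choose_spec ((step1_core E owner F h.2).1 h.1)
      rw [hw]
      exact spec.2

lemma play1 (E : V → V → Prop) (htotal : ∀ v, ∃ w, E v w)
    (owner : V → Bool) (F : Set V) {v : V} (hv : v ∉ W0 E owner F)
    (π : ℕ → V) (hπ : BuchiConsistent E owner true (sigma1 E htotal owner F) v π) :
    ¬ {n : ℕ | π n ∈ F}.Infinite := by
  obtain ⟨h0, hstep⟩ := hπ
  have inv : ∀ n, π n ∉ W0 E owner F := by
    intro n
    induction n with
    | zero => rwa [h0]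
    | succ n ih =>
        exact (step1 E htotal owner F ih (hstep n).1 (hstep n).2).1
  have anti : ∀ n m, n ≤ m → lvl E owner F (π m) ≤ lvl E owner F (π n) := by
    intro n m hnm
    induction m with
    | zero => simp [Nat.le_zero.mp hnm]
    | succ m ih =>
        rcases Nat.lt_or_ge n (m+1) with h' | h'
        · have h1 := (step1 E htotal owner F (inv m) (hstep m).1 (hstep m).2).2.1
          exact h1.trans (ih (Nat.lt_succ_iff.mp h'))
        · have : n = m+1 := le_antisymm hnm h'
          simp [this]
  intro hinf
  have key : ∀ k n, lvl E owner F (π n) ≤ k → False := by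
    intro k
    induction k with
    | zero =>
        intro n hn
        obtain ⟨m, hmF, hm⟩ := hinf.exists_gt n
        have h1 : lvl E owner F (π m) ≤ lvl E owner F (π n) := anti n m (le_of_lt hm)
        have h2 := (step1 E htotal owner F (inv m) (hstep m).1 (hstep m).2).2.2 hmF
        omega
    | succ k ih =>
        intro n hn
        obtain ⟨m, hmF, hm⟩ := hinf.exists_gt n
        have h1 : lvl E owner F (π m) ≤ lvl E owner F (π n) := anti n m (le_of_lt hm)
        have h2 := (step1 E htotal owner F (inv m) (hstep m).1 (hstep m).2).2.2 hmF
        exact ih (m+1) (by omega)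
  exact key (lvl E owner F (π 0)) 0 (le_refl _)

/-! ### Winning and mutual exclusion -/

lemma win0 (E : V → V → Prop) (htotal : ∀ v, ∃ w, E v w)
    (owner : V → Bool) (F : Set V) {v : V} (hv : v ∈ W0 E owner F) :
    BuchiPosWinning E owner F false v := by
  refine ⟨sigma0 E htotal owner F, sigma0_legal E htotal owner F, fun π hπ => ?_⟩
  simp only [iff_true]
  exact play0 E htotal owner F hv π hπ

lemma win1 (E : V → V → Prop) (htotal : ∀ v, ∃ w, E v w)
    (owner : V → Bool) (F : Set V) {v : V} (hv : v ∉ W0 E owner F) :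
    BuchiPosWinning E owner F true v := by
  refine ⟨sigma1 E htotal owner F, sigma1_legal E htotal owner F, fun π hπ => ?_⟩
  simp only [Bool.true_eq_false, iff_false]
  exact play1 E htotal owner F hv π hπ

lemma not_both (E : V → V → Prop) (owner : V → Bool) (F : Set V) (v : V)
    (h0 : BuchiPosWinning E owner F false v) (h1 : BuchiPosWinning E owner F true v) :
    False := by
  obtain ⟨σ0, hl0, hw0⟩ := h0
  obtain ⟨σ1, hl1, hw1⟩ := h1
  set π : ℕ → V := fun n =>
    Nat.rec v (fun _ p => if owner p = false then σ0 p else σ1 p) n with hπ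
  have hstep : ∀ n, π (n+1) = if owner (π n) = false then σ0 (π n) else σ1 (π n) :=
    fun n => rfl
  have hedge : ∀ n, E (π n) (π (n+1)) := by
    intro n
    rw [hstep n]
    by_cases h : owner (π n) = false
    · rw [if_pos h]
      exact hl0 (π n) h
    · rw [if_neg h]
      exact hl1 (π n) (by revert h; cases owner (π n) <;> simp)
  have hc0 : BuchiConsistent E owner false σ0 v π := by
    refine ⟨rfl, fun n => ⟨hedge n, fun ho => ?_⟩⟩
    rw [hstep n, if_pos ho]
  have hc1 : BuchiConsistent E owner true σ1 v π := by
    refine ⟨rfl, fun n => ⟨hedge n, fun ho => ?_⟩⟩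
    rw [hstep n, if_neg (by simp [ho])]
  have i0 := hw0 π hc0
  have i1 := hw1 π hc1
  simp only [iff_true, Bool.true_eq_false, iff_false] at i0 i1
  exact i1 i0

end BuchiAux

/-- Finite Büchi games are positionally determined: on a finite
directed graph in which every vertex has a successor, with vertices partitioned
between the two players and a target set `F`, from every vertex exactly one of
the players has a positional winning strategy. -/
theorem finite_buchi_positional_determinacy [Fintype V]
    (E : V → V → Prop) (htotal : ∀ v, ∃ w, E v w)
    (owner : V → Bool) (F : Set V) (v : V) :
    Xor' (BuchiPosWinning E owner F false v) (BuchiPosWinning E owner F true v) := by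
  by_cases hv : v ∈ BuchiAux.W0 E owner F
  · exact Or.inl ⟨BuchiAux.win0 E htotal owner F hv,
      fun h1 => BuchiAux.not_both E owner F v (BuchiAux.win0 E htotal owner F hv) h1⟩
  · exact Or.inr ⟨BuchiAux.win1 E htotal owner F hv,
      fun h0 => BuchiAux.not_both E owner F v h0 (BuchiAux.win1 E htotal owner F hv)⟩
end

section
/- If an infinite game graph where every play either terminates (reaching a terminal position with an assigned winner) or is infinite and then won by a fixed rule assigning the winner based on which player 'moved last among a finite counter of alternations', and the alternation counter is bounded by a fixed n and strictly decreases at each alternation, then the game is determined. Abstractly: a game whose plays are infinite only through a suffix controlled by a single fixed player (who then loses) is equivalent to a game with an auxiliary co-Büchi winning condition, and hence determined. -/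
/-- An abstract transition/evaluation game: positions carry a player to move,
a seeker, and a counter bounded by `N` which is non-increasing along moves and
strictly decreases whenever the seeker changes.  Infinite plays are lost by the
eventually-constant seeker; finite (terminal) positions have an assigned
winner. -/
structure TGame (Pos : Type) where
  move : Pos → Pos → Prop
  turn : Pos → Bool
  seeker : Pos → Bool
  counter : Pos → ℕ
  winner : Pos → Bool
  N : ℕ
  counter_le : ∀ p, counter p ≤ N
  counter_mono : ∀ p q, move p q → counter q ≤ counter p
  counter_swap : ∀ p q, move p q → seeker q ≠ seeker p → counter q < counter p

def TGame.Terminal {Pos : Type} (G : TGame Pos) (p : Pos) : Prop :=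
  ∀ q, ¬ G.move p q

/-- One step of a play in which player `P` follows the positional strategy `σ`. -/
def TGame.Follows {Pos : Type} (G : TGame Pos) (σ : Pos → Pos) (P : Bool)
    (p q : Pos) : Prop :=
  G.move p q ∧ (G.turn p = P → q = σ p)

/-- An infinite play from `p` in which player `P` follows `σ`. -/
def TGame.InfPlay {Pos : Type} (G : TGame Pos) (σ : Pos → Pos) (P : Bool)
    (p : Pos) (π : ℕ → Pos) : Prop :=
  π 0 = p ∧ ∀ n, G.Follows σ P (π n) (π (n + 1))

/-- Player `P` has a winning strategy from `p`: every reachable terminal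
position is won by `P`, and in every infinite consistent play the eventually
constant seeker is not `P` (the player who remains seeker forever loses). -/
def TGame.Winning {Pos : Type} (G : TGame Pos) (P : Bool) (p : Pos) : Prop :=
  ∃ σ : Pos → Pos,
    (∀ r, G.turn r = P → ¬ G.Terminal r → G.move r (σ r)) ∧
    (∀ q, Relation.ReflTransGen (G.Follows σ P) p q →
      G.Terminal q → G.winner q = P) ∧
    (∀ π : ℕ → Pos, G.InfPlay σ P p π →
      ∀ s : Bool, (∃ N₀, ∀ n ≥ N₀, G.seeker (π n) = s) → s ≠ P)

noncomputable section
open Classical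

namespace TGameAux

variable {Pos : Type} (G : TGame Pos)

/-- `val` : value of a successor position `q`, from the point of view of the
seeker `s` at the current counter level `c`.  `L` decides seeker-wins at lower
counters, `X` is the current approximation at level `c`. -/
def val (L : Pos → Prop) (c : ℕ) (X : Pos → Prop) (s : Bool) (q : Pos) : Prop :=
  if G.counter q < c then (L q ↔ G.seeker q = s) else X q

def step (L : Pos → Prop) (c : ℕ) (X : Pos → Prop) (p : Pos) : Prop :=
  (G.Terminal p ∧ G.winner p = G.seeker p) ∨
  (¬ G.Terminal p ∧ G.turn p = G.seeker p ∧ ∃ q, G.move p q ∧ val G L c X (G.seeker p) q) ∨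
  (¬ G.Terminal p ∧ G.turn p ≠ G.seeker p ∧ ∀ q, G.move p q → val G L c X (G.seeker p) q)

def stage (L : Pos → Prop) (c : ℕ) : Ordinal.{0} → Pos → Prop :=
  Ordinal.lt_wf.fix
    (fun o ih p => step G L c (fun q => ∃ o', ∃ h : o' < o, ih o' h q) p)

lemma stage_iff (L : Pos → Prop) (c : ℕ) (o : Ordinal) (p : Pos) :
    stage G L c o p ↔
      step G L c (fun q => ∃ o', ∃ _ : o' < o, stage G L c o' q) p := by
  unfold stage
  conv_lhs => rw [WellFounded.fix_eq]

def W : (c : ℕ) → Pos → Prop := fun c p =>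
  ∃ o, stage G (fun q => if _ : G.counter q < c then W (G.counter q) q else True) c o p
termination_by c => c

def win (p : Pos) : Prop := W G (G.counter p) p


lemma val_congr {L L' X X' : Pos → Prop} {c : ℕ} {s : Bool} {q : Pos}
    (hL : ∀ r, G.counter r < c → (L r ↔ L' r)) (hX : ∀ r, X r ↔ X' r) :
    val G L c X s q ↔ val G L' c X' s q := by
  unfold val
  split
  · exact iff_congr (hL q (by assumption)) Iff.rfl
  · exact hX q

lemma step_congr {L L' X X' : Pos → Prop} {c : ℕ} {p : Pos}
    (hL : ∀ r, G.counter r < c → (L r ↔ L' r)) (hX : ∀ r, X r ↔ X' r) :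
    step G L c X p ↔ step G L' c X' p := by
  unfold step
  refine or_congr Iff.rfl (or_congr ?_ ?_)
  · refine and_congr Iff.rfl (and_congr Iff.rfl (exists_congr fun q => ?_))
    exact and_congr Iff.rfl (val_congr G hL hX)
  · refine and_congr Iff.rfl (and_congr Iff.rfl (forall_congr' fun q => ?_))
    exact imp_congr Iff.rfl (val_congr G hL hX)

lemma stage_congr {L L' : Pos → Prop} {c : ℕ}
    (hL : ∀ r, G.counter r < c → (L r ↔ L' r)) :
    ∀ o p, stage G L c o p ↔ stage G L' c o p := by
  intro o
  induction o using Ordinal.induction with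
  | h o ih =>
    intro p
    rw [stage_iff, stage_iff]
    refine step_congr G hL fun r => ?_
    exact exists_congr fun o' => exists_congr fun h => ih o' h r

lemma win_iff_exists (p : Pos) :
    win G p ↔ ∃ o, stage G (win G) (G.counter p) o p := by
  unfold win
  rw [W]
  refine exists_congr fun o => stage_congr G (fun r hr => ?_) o p
  rw [dif_pos hr]

/-- `Stg c o p` : `p` is in the stage-`o` attractor at counter level `c`. -/
def Stg (c : ℕ) (o : Ordinal.{0}) (p : Pos) : Prop := stage G (win G) c o p

lemma stg_iff (c : ℕ) (o : Ordinal.{0}) (p : Pos) :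
    Stg G c o p ↔
      step G (win G) c (fun q => ∃ o', ∃ _ : o' < o, Stg G c o' q) p :=
  stage_iff G _ c o p

def rank (p : Pos) : Ordinal.{0} :=
  if h : ∃ o, Stg G (G.counter p) o p then
    Ordinal.lt_wf.min {o | Stg G (G.counter p) o p} h
  else 0

lemma rank_mem {p : Pos} (h : win G p) : Stg G (G.counter p) (rank G p) p := by
  have h' : ∃ o, Stg G (G.counter p) o p := (win_iff_exists G p).1 h
  unfold rank
  rw [dif_pos h']
  exact Ordinal.lt_wf.min_mem _ h'

lemma rank_le {p : Pos} {o : Ordinal.{0}} (h : Stg G (G.counter p) o p) :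
    rank G p ≤ o := by
  have h' : ∃ o, Stg G (G.counter p) o p := ⟨o, h⟩
  unfold rank
  rw [dif_pos h']
  exact not_lt.1 (Ordinal.lt_wf.not_lt_min _ h)

lemma win_of_stg {p : Pos} {o : Ordinal.{0}} (h : Stg G (G.counter p) o p) :
    win G p := (win_iff_exists G p).2 ⟨o, h⟩


lemma counter_eq {p q : Pos} (hm : G.move p q) (h : ¬ G.counter q < G.counter p) :
    G.counter q = G.counter p :=
  le_antisymm (G.counter_mono p q hm) (not_lt.1 h)

lemma seeker_eq {p q : Pos} (hm : G.move p q) (h : ¬ G.counter q < G.counter p) :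
    G.seeker q = G.seeker p := by
  by_contra hne
  exact h (G.counter_swap p q hm hne)

/-- Closure: the winning set is closed under one game step. -/
lemma win_closed {p : Pos}
    (h : step G (win G) (G.counter p) (win G) p) : win G p := by
  set c := G.counter p with hc
  rcases h with ⟨ht, hw⟩ | ⟨ht, he, q, hq, hv⟩ | ⟨ht, he, hall⟩
  · refine win_of_stg G (o := 0) ?_
    rw [stg_iff]
    exact Or.inl ⟨ht, hw⟩
  · by_cases hlt : G.counter q < c
    · refine win_of_stg G (o := 0) ?_
      rw [stg_iff]
      refine Or.inr (Or.inl ⟨ht, he, q, hq, ?_⟩)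
      unfold val at hv ⊢
      rw [if_pos hlt] at hv ⊢
      exact hv
    · unfold val at hv
      rw [if_neg hlt] at hv
      have hcq : G.counter q = c := counter_eq G hq hlt
      obtain ⟨o₀, ho₀⟩ := (win_iff_exists G q).1 hv
      rw [hcq] at ho₀
      refine win_of_stg G (o := Order.succ o₀) ?_
      rw [stg_iff]
      refine Or.inr (Or.inl ⟨ht, he, q, hq, ?_⟩)
      unfold val
      rw [if_neg hlt]
      exact ⟨o₀, Order.lt_succ o₀, ho₀⟩
  · -- opponent-to-move case: take sup of ranks of successors at the same level
    let ι := {q // G.move p q ∧ ¬ G.counter q < c}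
    let f : ι → Ordinal.{0} := fun q => rank G q.1
    refine win_of_stg G (o := Order.succ (⨆ i, f i)) ?_
    rw [stg_iff]
    refine Or.inr (Or.inr ⟨ht, he, fun q hq => ?_⟩)
    have hv := hall q hq
    unfold val at hv ⊢
    by_cases hlt : G.counter q < c
    · rw [if_pos hlt] at hv ⊢
      exact hv
    · rw [if_neg hlt] at hv ⊢
      have hcq : G.counter q = c := counter_eq G hq hlt
      have hstg : Stg G c (rank G q) q := by
        have := rank_mem G hv
        rwa [hcq] at this
      refine ⟨rank G q, ?_, hstg⟩
      have h1 : f ⟨q, hq, hlt⟩ ≤ ⨆ i, f i :=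
        le_ciSup (Ordinal.bddAbove_range f) _
      exact lt_of_le_of_lt h1 (Order.lt_succ _)

/-- Unfolding: a winning position satisfies one game step into the winning set. -/
lemma win_unfold {p : Pos} (h : win G p) :
    step G (win G) (G.counter p) (win G) p := by
  have hs := rank_mem G h
  rw [stg_iff] at hs
  set c := G.counter p with hc
  have key : ∀ q, G.move p q →
      (val G (win G) c (fun r => ∃ o', ∃ _ : o' < rank G p, Stg G c o' r) (G.seeker p) q →
        val G (win G) c (win G) (G.seeker p) q) := by
    intro q hq hv
    unfold val at hv ⊢
    by_cases hlt : G.counter q < c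
    · rw [if_pos hlt] at hv ⊢; exact hv
    · rw [if_neg hlt] at hv ⊢
      obtain ⟨o', _, ho'⟩ := hv
      have hcq : G.counter q = c := counter_eq G hq hlt
      refine win_of_stg G (o := o') ?_
      rwa [hcq]
  rcases hs with h1 | ⟨ht, he, q, hq, hv⟩ | ⟨ht, he, hall⟩
  · exact Or.inl h1
  · exact Or.inr (Or.inl ⟨ht, he, q, hq, key q hq hv⟩)
  · exact Or.inr (Or.inr ⟨ht, he, fun q hq => key q hq (hall q hq)⟩)

lemma win_iff_step (p : Pos) :
    win G p ↔ step G (win G) (G.counter p) (win G) p :=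
  ⟨win_unfold G, win_closed G⟩


/-- `winFor P p` : player `P` wins from `p`. -/
def winFor (P : Bool) (p : Pos) : Prop := win G p ↔ G.seeker p = P

lemma val_good {P : Bool} {r q : Pos} (hs : G.seeker r = P) (hq : G.move r q)
    (hv : val G (win G) (G.counter r)
      (fun x => ∃ o', ∃ _ : o' < rank G r, Stg G (G.counter r) o' x) (G.seeker r) q) :
    winFor G P q ∧ (¬ G.counter q < G.counter r → rank G q < rank G r) := by
  unfold val at hv
  by_cases hlt : G.counter q < G.counter r
  · rw [if_pos hlt] at hv
    rw [hs] at hv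
    exact ⟨hv, fun h => absurd hlt h⟩
  · rw [if_neg hlt] at hv
    obtain ⟨o', ho', hstg⟩ := hv
    have hcq : G.counter q = G.counter r := counter_eq G hq hlt
    have hwq : win G q := win_of_stg G (o := o') (by rwa [hcq])
    have hsq : G.seeker q = G.seeker r := seeker_eq G hq hlt
    have hrk : rank G q ≤ o' := rank_le G (by rwa [hcq])
    refine ⟨?_, fun _ => lt_of_le_of_lt hrk ho'⟩
    unfold winFor
    rw [hsq, hs]
    exact iff_of_true hwq rfl

lemma seeker_move_all {P : Bool} {r q : Pos} (hs : G.seeker r = P) (hw : win G r)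
    (ht : G.turn r ≠ G.seeker r) (hq : G.move r q) :
    winFor G P q ∧ (¬ G.counter q < G.counter r → rank G q < rank G r) := by
  have hstg := rank_mem G hw
  rw [stg_iff] at hstg
  rcases hstg with ⟨hT, _⟩ | ⟨_, he, _⟩ | ⟨_, _, hall⟩
  · exact absurd hq (hT q)
  · exact absurd he ht
  · exact val_good G hs hq (hall q hq)

lemma seeker_move_ex {P : Bool} {r : Pos} (hs : G.seeker r = P) (hw : win G r)
    (ht : G.turn r = G.seeker r) (hT : ¬ G.Terminal r) :
    ∃ q, G.move r q ∧ winFor G P q ∧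
      (¬ G.counter q < G.counter r → rank G q < rank G r) := by
  have hstg := rank_mem G hw
  rw [stg_iff] at hstg
  rcases hstg with ⟨hT', _⟩ | ⟨_, _, q, hq, hv⟩ | ⟨_, he, _⟩
  · exact absurd hT' hT
  · exact ⟨q, hq, val_good G hs hq hv⟩
  · exact absurd ht he

lemma notval_good {P : Bool} {r q : Pos} (hsn : G.seeker r ≠ P) (hq : G.move r q)
    (hv : ¬ val G (win G) (G.counter r) (win G) (G.seeker r) q) :
    winFor G P q := by
  unfold val at hv
  unfold winFor
  by_cases hlt : G.counter q < G.counter r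
  · rw [if_pos hlt] at hv
    constructor
    · intro hwq
      by_contra hne
      apply hv
      refine iff_of_true hwq ?_
      cases P <;> cases hP : G.seeker q <;> cases hR : G.seeker r <;> simp_all
    · intro hP
      by_contra hnw
      apply hv
      refine iff_of_false hnw ?_
      cases P <;> cases hP' : G.seeker q <;> cases hR : G.seeker r <;> simp_all
  · rw [if_neg hlt] at hv
    have hsq : G.seeker q = G.seeker r := seeker_eq G hq hlt
    refine iff_of_false hv ?_
    rw [hsq]
    exact hsn

lemma safe_all {P : Bool} {r q : Pos} (hsn : G.seeker r ≠ P) (hw : ¬ win G r)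
    (ht : G.turn r = G.seeker r) (hq : G.move r q) : winFor G P q := by
  have hstep : ¬ step G (win G) (G.counter r) (win G) r := fun h => hw (win_closed G h)
  unfold step at hstep
  push_neg at hstep
  have hT : ¬ G.Terminal r := fun h => h q hq
  obtain ⟨-, h2, -⟩ := hstep
  have := h2 hT ht q hq
  exact notval_good G hsn hq this

lemma safe_ex {P : Bool} {r : Pos} (hsn : G.seeker r ≠ P) (hw : ¬ win G r)
    (ht : G.turn r ≠ G.seeker r) (hT : ¬ G.Terminal r) :
    ∃ q, G.move r q ∧ winFor G P q := by
  have hstep : ¬ step G (win G) (G.counter r) (win G) r := fun h => hw (win_closed G h)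
  unfold step at hstep
  push_neg at hstep
  obtain ⟨-, -, h3⟩ := hstep
  obtain ⟨q, hq, hv⟩ := h3 hT ht
  exact ⟨q, hq, notval_good G hsn hq hv⟩

lemma not_terminal_ex {r : Pos} (h : ¬ G.Terminal r) : ∃ q, G.move r q := by
  unfold TGame.Terminal at h
  push_neg at h
  exact h


/-- The positional strategy for player `P`. -/
def strat (P : Bool) : Pos → Pos := fun r =>
  if h : G.turn r = P ∧ ¬ G.Terminal r then
    if h1 : G.seeker r = P ∧ win G r then
      Classical.choose (seeker_move_ex G h1.1 h1.2 (h.1.trans h1.1.symm) h.2)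
    else if h2 : ¬ G.seeker r = P ∧ ¬ win G r then
      Classical.choose (safe_ex G h2.1 h2.2 (fun he => h2.1 (he ▸ h.1)) h.2)
    else
      Classical.choose (not_terminal_ex G h.2)
  else r

lemma strat_move {P : Bool} {r : Pos} (h1 : G.turn r = P) (h2 : ¬ G.Terminal r) :
    G.move r (strat G P r) := by
  unfold strat
  rw [dif_pos ⟨h1, h2⟩]
  split
  · next hc =>
    exact (Classical.choose_spec (seeker_move_ex G hc.1 hc.2 (h1.trans hc.1.symm) h2)).1
  split
  · next hc hc2 =>
    exact (Classical.choose_spec (safe_ex G hc2.1 hc2.2 (fun he => hc2.1 (he ▸ h1)) h2)).1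
  · exact Classical.choose_spec (not_terminal_ex G h2)

lemma strat_good {P : Bool} {r : Pos} (h1 : G.turn r = P) (h2 : ¬ G.Terminal r)
    (hwf : winFor G P r) :
    winFor G P (strat G P r) ∧
      (G.seeker r = P → ¬ G.counter (strat G P r) < G.counter r →
        rank G (strat G P r) < rank G r) := by
  unfold strat
  rw [dif_pos ⟨h1, h2⟩]
  split
  · next hc =>
    have hspec := Classical.choose_spec (seeker_move_ex G hc.1 hc.2 (h1.trans hc.1.symm) h2)
    exact ⟨hspec.2.1, fun _ => hspec.2.2⟩
  split
  · next hc hc2 =>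
    have hspec := Classical.choose_spec (safe_ex G hc2.1 hc2.2 (fun he => hc2.1 (he ▸ h1)) h2)
    exact ⟨hspec.2, fun hsP => absurd hsP hc2.1⟩
  · next hc hc2 =>
    exfalso
    by_cases hs : G.seeker r = P
    · exact hc ⟨hs, hwf.2 hs⟩
    · exact hc2 ⟨hs, fun hw => hs (hwf.1 hw)⟩

/-- Invariant: a step consistent with `strat P` preserves `winFor P`, and the
rank strictly decreases while the counter stays the same and `P` is the seeker. -/
lemma follows_good {P : Bool} {r q : Pos} (hwf : winFor G P r)
    (hf : G.Follows (strat G P) P r q) :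
    winFor G P q ∧
      (G.seeker r = P → ¬ G.counter q < G.counter r → rank G q < rank G r) := by
  obtain ⟨hm, himp⟩ := hf
  have hT : ¬ G.Terminal r := fun h => h q hm
  by_cases ht : G.turn r = P
  · rw [himp ht]
    exact strat_good G ht hT hwf
  · by_cases hs : G.seeker r = P
    · have hw : win G r := hwf.2 hs
      have ht' : G.turn r ≠ G.seeker r := fun he => ht (he.trans hs)
      have h := seeker_move_all G hs hw ht' hm
      exact ⟨h.1, fun _ => h.2⟩
    · have hw' : ¬ win G r := fun w => hs (hwf.1 w)
      have ht' : G.turn r = G.seeker r := by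
        cases hP : G.turn r <;> cases hQ : G.seeker r <;> cases P <;> simp_all
      exact ⟨safe_all G hs hw' ht' hm, fun hsP => absurd hsP hs⟩

lemma terminal_winner {P : Bool} {q : Pos} (hwf : winFor G P q) (hT : G.Terminal q) :
    G.winner q = P := by
  have hws : win G q ↔ G.winner q = G.seeker q := by
    rw [win_iff_step]
    unfold step
    constructor
    · rintro (⟨_, h⟩ | ⟨h, _⟩ | ⟨h, _⟩) <;> first | exact h | exact absurd hT h
    · intro h
      exact Or.inl ⟨hT, h⟩
  unfold winFor at hwf
  rw [hws] at hwf
  cases hw : G.winner q <;> cases hs : G.seeker q <;> cases P <;> simp_all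


lemma stabilize (a : ℕ → ℕ) (h : ∀ n, a (n + 1) ≤ a n) :
    ∃ M, ∀ n ≥ M, a n = a M := by
  have hanti : ∀ m n, m ≤ n → a n ≤ a m := by
    intro m n hmn
    induction hmn with
    | refl => exact le_refl _
    | step _ ih => exact le_trans (h _) ih
  have hmem := Nat.sInf_mem (Set.range_nonempty a)
  obtain ⟨M, hM⟩ := hmem
  refine ⟨M, fun n hn => le_antisymm (hanti M n hn) ?_⟩
  rw [hM]
  exact Nat.sInf_le ⟨n, rfl⟩

lemma seeker_stab (π : ℕ → Pos) (h : ∀ n, G.move (π n) (π (n + 1))) :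
    ∃ s N₀, ∀ n ≥ N₀, G.seeker (π n) = s := by
  obtain ⟨M, hM⟩ := stabilize (fun n => G.counter (π n)) (fun n => G.counter_mono _ _ (h n))
  refine ⟨G.seeker (π M), M, ?_⟩
  intro n hn
  induction hn with
  | refl => rfl
  | @step m hMm ih =>
    by_contra hne
    have hlt := G.counter_swap _ _ (h m) (fun he => hne (he.trans ih))
    have e1 : G.counter (π (m + 1)) = G.counter (π M) := hM (m + 1) (le_trans hMm (Nat.le_succ m))
    have e2 : G.counter (π m) = G.counter (π M) := hM m hMm
    omega

lemma no_descending (g : ℕ → Ordinal.{0}) (h : ∀ n, g (n + 1) < g n) : False := by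
  have hmem := Ordinal.lt_wf.min_mem (Set.range g) (Set.range_nonempty g)
  obtain ⟨k, hk⟩ := hmem
  exact Ordinal.lt_wf.not_lt_min (Set.range g)
    (Set.mem_range_self (k + 1)) (hk ▸ h k)

lemma winFor_winning {P : Bool} {p : Pos} (h : winFor G P p) : G.Winning P p := by
  refine ⟨strat G P, fun r h1 h2 => strat_move G h1 h2, ?_, ?_⟩
  · intro q hq hT
    have hwf : winFor G P q := by
      clear hT
      induction hq with
      | refl => exact h
      | tail _ hstep ih => exact (follows_good G ih hstep).1
    exact terminal_winner G hwf hT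
  · intro π hπ s hs hsP
    obtain ⟨N₀, hN₀⟩ := hs
    have hwf : ∀ n, winFor G P (π n) := by
      intro n
      induction n with
      | zero => rw [hπ.1]; exact h
      | succ n ih => exact (follows_good G ih (hπ.2 n)).1
    obtain ⟨M, hM⟩ := stabilize (fun n => G.counter (π n))
      (fun n => G.counter_mono _ _ (hπ.2 n).1)
    set K := max M N₀ with hK
    have hdec : ∀ n, rank G (π (K + n + 1)) < rank G (π (K + n)) := by
      intro n
      have h1 := follows_good G (hwf (K + n)) (hπ.2 (K + n))
      refine h1.2 ?_ ?_
      · rw [hN₀ (K + n) (le_trans (le_max_right _ _) (Nat.le_add_right _ _)), hsP]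
      · have e1 : G.counter (π (K + n + 1)) = G.counter (π M) :=
          hM _ (le_trans (le_max_left M N₀) (by omega))
        have e2 : G.counter (π (K + n)) = G.counter (π M) :=
          hM _ (le_trans (le_max_left M N₀) (by omega))
        rw [e1, e2]
        exact lt_irrefl _
    exact no_descending (fun n => rank G (π (K + n))) hdec

lemma winFor_or (p : Pos) : winFor G true p ∨ winFor G false p := by
  unfold winFor
  by_cases h : win G p <;> cases hs : G.seeker p <;> simp [h, hs]


lemma not_both {p : Pos} (h1 : G.Winning true p) (h2 : G.Winning false p) : False := by
  obtain ⟨σt, ht1, ht2, ht3⟩ := h1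
  obtain ⟨σf, hf1, hf2, hf3⟩ := h2
  set f : Pos → Pos := fun r => if G.turn r = true then σt r else σf r with hf
  set π : ℕ → Pos := fun n => f^[n] p with hπdef
  have hπ0 : π 0 = p := rfl
  have hπs : ∀ n, π (n + 1) = f (π n) := fun n => Function.iterate_succ_apply' f n p
  have step_both : ∀ n, ¬ G.Terminal (π n) →
      G.Follows σt true (π n) (π (n + 1)) ∧ G.Follows σf false (π n) (π (n + 1)) := by
    intro n hT
    rw [hπs n]
    by_cases ht : G.turn (π n) = true
    · have hm : G.move (π n) (f (π n)) := by
        rw [hf]; simp only [ht, if_true]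
        exact ht1 _ ht hT
      refine ⟨⟨hm, fun _ => by rw [hf]; simp [ht]⟩, ⟨hm, fun hcon => ?_⟩⟩
      rw [ht] at hcon; exact absurd hcon (by simp)
    · have ht' : G.turn (π n) = false := by cases h : G.turn (π n) <;> simp_all
      have hm : G.move (π n) (f (π n)) := by
        rw [hf]; simp only [ht, if_false]
        exact hf1 _ ht' hT
      refine ⟨⟨hm, fun hcon => absurd hcon ht⟩, ⟨hm, fun _ => by rw [hf]; simp [ht]⟩⟩
  by_cases hterm : ∃ k, G.Terminal (π k)
  · set k := Nat.find hterm with hkdef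
    have hk : G.Terminal (π k) := Nat.find_spec hterm
    have hlt : ∀ i, i < k → ¬ G.Terminal (π i) := fun i hi => Nat.find_min hterm hi
    have rtg : ∀ (P : Bool) (σ : Pos → Pos),
        (∀ i, i < k → G.Follows σ P (π i) (π (i + 1))) →
        Relation.ReflTransGen (G.Follows σ P) p (π k) := by
      intro P σ hstep
      have : ∀ j, j ≤ k → Relation.ReflTransGen (G.Follows σ P) p (π j) := by
        intro j
        induction j with
        | zero => intro _; rw [hπ0]
        | succ j ih =>
          intro hj
          exact (ih (by omega)).tail (hstep j (by omega))
      exact this k le_rfl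
    have w1 := ht2 _ (rtg true σt (fun i hi => (step_both i (hlt i hi)).1)) hk
    have w2 := hf2 _ (rtg false σf (fun i hi => (step_both i (hlt i hi)).2)) hk
    rw [w1] at w2
    exact absurd w2 (by simp)
  · push_neg at hterm
    have hmove : ∀ n, G.move (π n) (π (n + 1)) := fun n => (step_both n (hterm n)).1.1
    obtain ⟨s, N₀, hs⟩ := seeker_stab G π hmove
    have c1 := ht3 π ⟨hπ0, fun n => (step_both n (hterm n)).1⟩ s ⟨N₀, hs⟩
    have c2 := hf3 π ⟨hπ0, fun n => (step_both n (hterm n)).2⟩ s ⟨N₀, hs⟩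
    cases s
    · exact c2 rfl
    · exact c1 rfl

end TGameAux


/-- A game whose plays are infinite only through a suffix in
which a single fixed player remains seeker forever (and then loses) is
determined: from every position exactly one player has a winning strategy. -/
theorem tgame_determinacy {Pos : Type} (G : TGame Pos) (p : Pos) :
    Xor' (G.Winning true p) (G.Winning false p) := by
  rcases TGameAux.winFor_or G p with h | h
  · exact Or.inl ⟨TGameAux.winFor_winning G h,
      fun hb => TGameAux.not_both G (TGameAux.winFor_winning G h) hb⟩
  · exact Or.inr ⟨TGameAux.winFor_winning G h,
      fun hb => TGameAux.not_both G hb (TGameAux.winFor_winning G h)⟩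
end
end
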